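/- Let Q be a finite connected quiver and k a field, and let A = kQ/J² be the radical square zero algebra, i.e. the path algebra of Q modulo the ideal J² generated by all paths of length 2. Assume Q has at least one arrow and is not the quiver with a single vertex and a single loop. Then the center Z(A) has k-dimension equal to 1 + ℓ, where ℓ is the number of loops of Q (arrows a with s(a) = t(a)); a basis is given by the unit 1 together with the residue classes of the loops. -/

import Mathlib

/-- A finite quiver: finite sets of vertices and arrows with source/target maps. -/
structure FinQuiver where
  V : Type
  E : Type
  [fV : Fintype V]
  [fE : Fintype E]
  s : E → V
  t : E → V

attribute [instance] FinQuiver.fV FinQuiver.fE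

/-- The underlying undirected graph of a quiver. -/
def FinQuiver.graph (Q : FinQuiver) : SimpleGraph Q.V :=
  SimpleGraph.fromRel (fun x y => ∃ a, Q.s a = x ∧ Q.t a = y)

/-- A quiver is connected if its underlying undirected graph is connected. -/
def FinQuiver.Connected (Q : FinQuiver) : Prop := Q.graph.Connected

/-- The radical square zero algebra `kQ/J²` of a finite connected quiver `Q`
(with at least one arrow, not a single loop) has center of dimension `1 + ℓ`
where `ℓ` is the number of loops, with basis the unit together with the loops.
Here `A` is any `k`-algebra with basis indexed by vertices and arrows,
multiplying as in `kQ/J²`. -/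
theorem stmt14 (k : Type) [Field k] (Q : FinQuiver)
    (hconn : Q.Connected) (harrow : Nonempty Q.E)
    (hnotloop : ¬ (Fintype.card Q.V = 1 ∧ Fintype.card Q.E = 1))
    (A : Type) [Ring A] [Algebra k A]
    (b : Module.Basis (Q.V ⊕ Q.E) k A)
    (hvv_eq : ∀ v : Q.V, b (Sum.inl v) * b (Sum.inl v) = b (Sum.inl v))
    (hvv_ne : ∀ v w : Q.V, v ≠ w → b (Sum.inl v) * b (Sum.inl w) = 0)
    (hva_eq : ∀ (v : Q.V) (a : Q.E), v = Q.t a → b (Sum.inl v) * b (Sum.inr a) = b (Sum.inr a))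
    (hva_ne : ∀ (v : Q.V) (a : Q.E), v ≠ Q.t a → b (Sum.inl v) * b (Sum.inr a) = 0)
    (hav_eq : ∀ (a : Q.E) (v : Q.V), v = Q.s a → b (Sum.inr a) * b (Sum.inl v) = b (Sum.inr a))
    (hav_ne : ∀ (a : Q.E) (v : Q.V), v ≠ Q.s a → b (Sum.inr a) * b (Sum.inl v) = 0)
    (haa : ∀ a c : Q.E, b (Sum.inr a) * b (Sum.inr c) = 0)
    (hone : (1 : A) = ∑ v : Q.V, b (Sum.inl v)) :
    Module.finrank k (Subalgebra.center k A)
      = 1 + Nat.card {a : Q.E // Q.s a = Q.t a} ∧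
    Subalgebra.toSubmodule (Subalgebra.center k A)
      = Submodule.span k
          (insert 1 (Set.range fun a : {a : Q.E // Q.s a = Q.t a} => b (Sum.inr a.1))) := by
  classical
  obtain ⟨a₀⟩ := harrow
  have v₀ : Q.V := Q.s a₀
  -- generic repr-of-product lemmas
  have hrepr_right : ∀ (x : A) (j m : Q.V ⊕ Q.E),
      b.repr (x * b j) m = ∑ i, b.repr x i * b.repr (b i * b j) m := by
    intro x j m
    conv_lhs => rw [← b.sum_repr x]
    rw [Finset.sum_mul, map_sum]
    simp [smul_mul_assoc]
  have hrepr_left : ∀ (x : A) (j m : Q.V ⊕ Q.E),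
      b.repr (b j * x) m = ∑ i, b.repr x i * b.repr (b j * b i) m := by
    intro x j m
    conv_lhs => rw [← b.sum_repr x]
    rw [Finset.mul_sum, map_sum]
    simp [mul_smul_comm]
  -- key coefficient computations
  have key1 : ∀ (x : A) (w : Q.V) (a : Q.E),
      b.repr (x * b (Sum.inl w)) (Sum.inr a)
        = if Q.s a = w then b.repr x (Sum.inr a) else 0 := by
    intro x w a
    rw [hrepr_right]
    rw [Finset.sum_eq_single (Sum.inr a)]
    · by_cases h : Q.s a = w
      · rw [if_pos h, hav_eq a w h.symm, b.repr_self]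
        simp
      · rw [if_neg h, hav_ne a w (fun hh => h hh.symm)]
        simp
    · rintro (v | a') - hne
      · by_cases h : v = w
        · subst h; rw [hvv_eq, b.repr_self]; simp
        · rw [hvv_ne _ _ h]; simp
      · have ha' : a' ≠ a := fun h => hne (by rw [h])
        by_cases h : w = Q.s a'
        · rw [hav_eq a' w h, b.repr_self, Finsupp.single_apply]
          simp [ha']
        · rw [hav_ne a' w h]; simp
    · intro h; exact absurd (Finset.mem_univ _) h
  have key2 : ∀ (x : A) (w : Q.V) (a : Q.E),
      b.repr (b (Sum.inl w) * x) (Sum.inr a)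
        = if Q.t a = w then b.repr x (Sum.inr a) else 0 := by
    intro x w a
    rw [hrepr_left]
    rw [Finset.sum_eq_single (Sum.inr a)]
    · by_cases h : Q.t a = w
      · rw [if_pos h, hva_eq w a h.symm, b.repr_self]
        simp
      · rw [if_neg h, hva_ne w a (fun hh => h hh.symm)]
        simp
    · rintro (v | a') - hne
      · by_cases h : w = v
        · subst h; rw [hvv_eq, b.repr_self]; simp
        · rw [hvv_ne _ _ h]; simp
      · have ha' : a' ≠ a := fun h => hne (by rw [h])
        by_cases h : w = Q.t a'
        · rw [hva_eq w a' h, b.repr_self, Finsupp.single_apply]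
          simp [ha']
        · rw [hva_ne w a' h]; simp
    · intro h; exact absurd (Finset.mem_univ _) h
  have key3 : ∀ (x : A) (a : Q.E),
      b.repr (x * b (Sum.inr a)) (Sum.inr a) = b.repr x (Sum.inl (Q.t a)) := by
    intro x a
    rw [hrepr_right]
    rw [Finset.sum_eq_single (Sum.inl (Q.t a))]
    · rw [hva_eq (Q.t a) a rfl, b.repr_self]
      simp
    · rintro (v | a') - hne
      · have hv : v ≠ Q.t a := fun h => hne (by rw [h])
        rw [hva_ne v a hv]; simp
      · rw [haa]; simp
    · intro h; exact absurd (Finset.mem_univ _) h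
  have key4 : ∀ (x : A) (a : Q.E),
      b.repr (b (Sum.inr a) * x) (Sum.inr a) = b.repr x (Sum.inl (Q.s a)) := by
    intro x a
    rw [hrepr_left]
    rw [Finset.sum_eq_single (Sum.inl (Q.s a))]
    · rw [hav_eq a (Q.s a) rfl, b.repr_self]
      simp
    · rintro (v | a') - hne
      · have hv : v ≠ Q.s a := fun h => hne (by rw [h])
        rw [hav_ne a v hv]; simp
      · rw [haa]; simp
    · intro h; exact absurd (Finset.mem_univ _) h
  -- repr of 1
  have hrepr_one : ∀ m : Q.V ⊕ Q.E,
      b.repr (1 : A) m = Sum.elim (fun _ => (1:k)) (fun _ => (0:k)) m := by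
    intro m
    rw [hone, map_sum]
    rcases m with v | a
    · rw [Finsupp.finset_sum_apply, Finset.sum_eq_single v]
      · rw [b.repr_self]; simp
      · intro w _ hw; rw [b.repr_self, Finsupp.single_apply]
        simp [hw]
      · intro h; exact absurd (Finset.mem_univ _) h
    · rw [Finsupp.finset_sum_apply]
      simp only [Sum.elim_inr]
      apply Finset.sum_eq_zero
      intro w _
      rw [b.repr_self, Finsupp.single_apply]
      simp
  -- loops are central
  have hloop_central : ∀ a : Q.E, Q.s a = Q.t a → b (Sum.inr a) ∈ Subalgebra.center k A := by
    intro a hla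
    rw [Subalgebra.mem_center_iff]
    intro y
    have hcomm : ∀ i, b i * b (Sum.inr a) = b (Sum.inr a) * b i := by
      rintro (v | a')
      · by_cases h : v = Q.t a
        · rw [hva_eq v a h, hav_eq a v (by rw [h, ← hla])]
        · rw [hva_ne v a h, hav_ne a v (by rw [hla]; exact h)]
      · rw [haa, haa]
    calc y * b (Sum.inr a) = (∑ i, b.repr y i • b i) * b (Sum.inr a) := by rw [b.sum_repr]
      _ = ∑ i, b.repr y i • (b i * b (Sum.inr a)) := by
            rw [Finset.sum_mul]; simp [smul_mul_assoc]
      _ = ∑ i, b.repr y i • (b (Sum.inr a) * b i) := by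
            exact Finset.sum_congr rfl fun i _ => by rw [hcomm]
      _ = b (Sum.inr a) * ∑ i, b.repr y i • b i := by
            rw [Finset.mul_sum]; simp [mul_smul_comm]
      _ = b (Sum.inr a) * y := by rw [b.sum_repr]
  -- the submodule equality
  have hS : Subalgebra.toSubmodule (Subalgebra.center k A)
      = Submodule.span k
          (insert 1 (Set.range fun a : {a : Q.E // Q.s a = Q.t a} => b (Sum.inr a.1))) := by
    apply le_antisymm
    · intro x hx
      have hx' : ∀ y : A, y * x = x * y :=
        Subalgebra.mem_center_iff.mp ((Subalgebra.mem_toSubmodule _).mp hx)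
      have hnl : ∀ a : Q.E, Q.s a ≠ Q.t a → b.repr x (Sum.inr a) = 0 := by
        intro a h
        have h2 := key2 x (Q.s a) a
        rw [hx', key1, if_pos rfl, if_neg (fun hh => h hh.symm)] at h2
        exact h2
      have hv : ∀ a : Q.E, b.repr x (Sum.inl (Q.s a)) = b.repr x (Sum.inl (Q.t a)) := by
        intro a
        have h4 := key4 x a
        rw [hx', key3] at h4
        exact h4.symm
      have hconst : ∀ u v : Q.V, b.repr x (Sum.inl u) = b.repr x (Sum.inl v) := by
        have hadj : ∀ u v, Q.graph.Adj u v →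
            b.repr x (Sum.inl u) = b.repr x (Sum.inl v) := by
          intro u v h
          rw [FinQuiver.graph, SimpleGraph.fromRel_adj] at h
          obtain ⟨-, ⟨a, h1, h2⟩ | ⟨a, h1, h2⟩⟩ := h
          · rw [← h1, ← h2]; exact hv a
          · rw [← h1, ← h2]; exact (hv a).symm
        intro u v
        obtain ⟨w⟩ := hconn.preconnected u v
        induction w with
        | nil => rfl
        | cons h p ih => exact (hadj _ _ h).trans ih
      have hxe : x = ∑ i, b.repr x i • b i := (b.sum_repr x).symm
      rw [hxe, Fintype.sum_sum_type]
      apply Submodule.add_mem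
      · have heq : ∑ v, b.repr x (Sum.inl v) • b (Sum.inl v)
            = b.repr x (Sum.inl v₀) • (1:A) := by
          rw [hone, Finset.smul_sum]
          exact Finset.sum_congr rfl fun v _ => by rw [hconst v v₀]
        rw [heq]
        exact Submodule.smul_mem _ _ (Submodule.subset_span (Set.mem_insert _ _))
      · apply Submodule.sum_mem
        intro a _
        by_cases h : Q.s a = Q.t a
        · exact Submodule.smul_mem _ _
            (Submodule.subset_span (Set.mem_insert_of_mem _ ⟨⟨a, h⟩, rfl⟩))
        · rw [hnl a h, zero_smul]; exact Submodule.zero_mem _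
    · rw [Submodule.span_le]
      rintro y hy
      rcases Set.mem_insert_iff.mp hy with rfl | ⟨a, rfl⟩
      · exact (Subalgebra.mem_toSubmodule _).mpr (Subalgebra.one_mem _)
      · exact (Subalgebra.mem_toSubmodule _).mpr (hloop_central a.1 a.2)
  refine ⟨?_, hS⟩
  -- dimension count
  have hrk : Module.finrank k (Subalgebra.center k A)
      = Module.finrank k (Subalgebra.toSubmodule (Subalgebra.center k A)) := rfl
  rw [hrk, hS]
  set f : Unit ⊕ {a : Q.E // Q.s a = Q.t a} → A :=
    Sum.elim (fun _ => (1:A)) (fun a => b (Sum.inr a.1)) with hf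
  have hrange : insert (1:A)
      (Set.range fun a : {a : Q.E // Q.s a = Q.t a} => b (Sum.inr a.1)) = Set.range f := by
    rw [hf, Set.Sum.elim_range, Set.insert_eq]
    congr 1
    ext y
    simp
  have hli : LinearIndependent k f := by
    rw [Fintype.linearIndependent_iff]
    intro g hg
    have hg' : ∀ m, ∑ i, g i * b.repr (f i) m = 0 := by
      intro m
      have : b.repr (∑ i, g i • f i) m = 0 := by rw [hg]; simp
      rw [map_sum, Finsupp.finset_sum_apply] at this
      simpa using this
    have h0 : g (Sum.inl ()) = 0 := by
      have := hg' (Sum.inl v₀)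
      rw [Fintype.sum_sum_type] at this
      simp only [hf, Sum.elim_inl, Sum.elim_inr, hrepr_one] at this
      have hz : ∀ a : {a : Q.E // Q.s a = Q.t a},
          g (Sum.inr a) * b.repr (b (Sum.inr a.1)) (Sum.inl v₀) = 0 := by
        intro a; rw [b.repr_self, Finsupp.single_apply]; simp
      rw [Finset.sum_congr rfl (fun a _ => hz a), Finset.sum_const_zero, add_zero] at this
      simpa using this
    intro i
    rcases i with _ | a
    · exact h0
    · have := hg' (Sum.inr a.1)
      rw [Fintype.sum_sum_type] at this
      simp only [hf, Sum.elim_inl, Sum.elim_inr, hrepr_one] at this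
      have hz1 : ∀ u : Unit, g (Sum.inl u) * (0:k) = 0 := fun u => mul_zero _
      rw [Finset.sum_congr rfl (fun u _ => hz1 u), Finset.sum_const_zero, zero_add] at this
      rw [Finset.sum_eq_single a] at this
      · rw [b.repr_self] at this
        simpa using this
      · intro a' _ ha'
        rw [b.repr_self, Finsupp.single_apply]
        have : (Sum.inr a'.1 : Q.V ⊕ Q.E) ≠ Sum.inr a.1 := by
          intro h
          exact ha' (Subtype.ext (Sum.inr.inj h))
        simp [this]
      · intro h; exact absurd (Finset.mem_univ _) h
    done
  rw [hrange, finrank_span_eq_card hli]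
  rw [Fintype.card_sum, Fintype.card_unit, Nat.card_eq_fintype_card]
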